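/- The function θ_Δ(τ) = η(τ)²/η(τ/2) satisfies the transformation law θ_Δ(τ/(2τ+1)) = (2τ+1)^{1/2} θ_Δ(τ) for all τ in the upper half-plane, where the square root is taken with the principal branch. -/

import Mathlib

open Complex Real Finset Topology


noncomputable section
namespace ThetaAux


lemma summable_log_one_add {f : ℕ → ℂ} (hf : Summable f) :
    Summable fun n => Complex.log (1 + f n) := by
  have h := (hf.norm.mul_left (3/2))
  refine h.of_norm_bounded_eventually ?_
  have hev : ∀ᶠ n in Filter.cofinite, ‖f n‖ ≤ 1/2 := by
    have := hf.tendsto_cofinite_zero.norm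
    simp only [norm_zero] at this
    exact this.eventually_le_const (by norm_num)
  filter_upwards [hev] with n hn
  exact Complex.norm_log_one_add_half_le_self hn

lemma multipliable_one_add {f : ℕ → ℂ} (hf : Summable f) (h0 : ∀ n, 1 + f n ≠ 0) :
    Multipliable (fun n => 1 + f n) :=
  Complex.multipliable_of_summable_log (summable_log_one_add hf)

lemma tprod_one_add_ne_zero {f : ℕ → ℂ} (hf : Summable f) (h0 : ∀ n, 1 + f n ≠ 0) :
    (∏' n, (1 + f n)) ≠ 0 := by
  rw [← Complex.cexp_tsum_eq_tprod h0 (summable_log_one_add hf)]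
  exact Complex.exp_ne_zero _

lemma one_add_ne_zero_of_norm_lt {z : ℂ} (hz : ‖z‖ < 1) : 1 + z ≠ 0 := by
  intro h
  have : z = -1 := by linear_combination h
  rw [this] at hz; simp at hz

lemma summable_cq {q : ℂ} (hq : ‖q‖ < 1) (c : ℂ) (a b : ℕ) (ha : a ≠ 0) :
    Summable (fun n : ℕ => c * q ^ (a * n + b)) := by
  apply Summable.of_norm
  have h1 : ‖q‖ ^ a < 1 := pow_lt_one₀ (norm_nonneg q) hq ha
  have := (summable_geometric_of_lt_one (by positivity) h1).mul_left (‖c‖ * ‖q‖ ^ b)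
  refine this.congr fun n => ?_
  rw [norm_mul, norm_pow, pow_add, pow_mul]
  ring


variable (P : ℂ)

/-- Gaussian binomial `[n choose r]_P`, via the q-Pascal recursion. -/
def gb : ℕ → ℕ → ℂ
  | 0, 0 => 1
  | 0, _+1 => 0
  | n+1, 0 => gb n 0
  | n+1, r+1 => gb n (r+1) + P ^ (n - r) * gb n r

@[simp] lemma gb_zero_right : ∀ n, gb P n 0 = 1
  | 0 => rfl
  | n+1 => by rw [gb, gb_zero_right]

lemma gb_eq_zero : ∀ {n r}, n < r → gb P n r = 0
  | 0, _+1, _ => rfl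
  | n+1, r+1, h => by
      rw [gb, gb_eq_zero (by omega), gb_eq_zero (by omega), mul_zero, add_zero]

lemma gb_diag : ∀ n, gb P n n = 1
  | 0 => rfl
  | n+1 => by simp [gb, gb_diag n, gb_eq_zero P (show n < n+1 by omega)]

/-- Product formula for Gaussian binomials. -/
lemma gb_mul_prod : ∀ n r, r ≤ n →
    gb P n r * ∏ j ∈ range r, (1 - P ^ (j+1))
      = ∏ j ∈ range r, (1 - P ^ (n - r + 1 + j))
  | 0, 0, _ => by simp [gb]
  | n+1, 0, _ => by simp
  | n+1, r+1, h => by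
      have hr : r ≤ n := by omega
      rcases eq_or_lt_of_le hr with rfl | hlt
      · rw [gb_diag, one_mul]
        exact Finset.prod_congr rfl fun j _ => by
          rw [show r + 1 - (r+1) + 1 + j = j + 1 from by omega]
      · -- r < n
        have IH1 := gb_mul_prod n (r+1) hlt
        have IH2 := gb_mul_prod n r hr
        have e1 : ∏ j ∈ range (r+1), (1 - P ^ (n - (r+1) + 1 + j))
            = ∏ j ∈ range (r+1), (1 - P ^ (n - r + j)) :=
          Finset.prod_congr rfl fun j _ => by
            rw [show n - (r+1) + 1 + j = n - r + j from by omega]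
        rw [e1] at IH1
        have e2 : ∏ j ∈ range (r+1), (1 - P ^ (n - r + j))
            = (∏ j ∈ range r, (1 - P ^ (n - r + 1 + j))) * (1 - P ^ (n - r)) := by
          rw [Finset.prod_range_succ', add_zero]
          exact congrArg (· * (1 - P^(n-r)))
            (Finset.prod_congr rfl fun j _ => by congr 2; omega)
        have e3 : ∏ j ∈ range (r+1), (1 - P ^ (n + 1 - (r+1) + 1 + j))
            = (∏ j ∈ range r, (1 - P ^ (n - r + 1 + j))) * (1 - P ^ (n + 1)) := by
          rw [Finset.prod_range_succ, show n + 1 - (r+1) + 1 + r = n + 1 from by omega]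
          exact congrArg (· * (1 - P^(n+1)))
            (Finset.prod_congr rfl fun j _ => by congr 2; omega)
        rw [gb]
        calc (gb P n (r+1) + P^(n-r) * gb P n r) * ∏ j ∈ range (r+1), (1 - P^(j+1))
            = gb P n (r+1) * ∏ j ∈ range (r+1), (1 - P^(j+1))
              + (P^(n-r) * (1 - P^(r+1))) * (gb P n r * ∏ j ∈ range r, (1 - P^(j+1))) := by
              rw [Finset.prod_range_succ]; ring
          _ = (∏ j ∈ range r, (1 - P^(n-r+1+j))) * (1 - P^(n-r))
              + (P^(n-r) * (1 - P^(r+1))) * ∏ j ∈ range r, (1 - P^(n-r+1+j)) := by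
              rw [IH1, e2, IH2]
          _ = (∏ j ∈ range r, (1 - P^(n-r+1+j))) * (1 - P^(n+1)) := by
              have hpow : P^(n-r) * P^(r+1) = P^(n+1) := by
                rw [← pow_add]; congr 1; omega
              linear_combination (-(∏ j ∈ range r, (1 - P^(n-r+1+j)))) * hpow
          _ = ∏ j ∈ range (r+1), (1 - P ^ (n + 1 - (r+1) + 1 + j)) := e3.symm

variable {P} (hP : ∀ j : ℕ, (1 : ℂ) - P ^ (j+1) ≠ 0)
include hP

/-- The "balancing" identity `(1-P^{r+1}) gb(n,r+1) = (1-P^{n-r}) gb(n,r)`. -/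
lemma gb_balance (n r : ℕ) :
    (1 - P^(r+1)) * gb P n (r+1) = (1 - P^(n-r)) * gb P n r := by
  rcases lt_or_ge r n with hlt | hge
  · have hD : (∏ j ∈ range (r+1), (1 - P^(j+1))) ≠ 0 :=
      Finset.prod_ne_zero_iff.2 fun j _ => hP j
    apply mul_right_cancel₀ hD
    have h1 := gb_mul_prod P n (r+1) hlt
    have h2 := gb_mul_prod P n r (le_of_lt hlt)
    have e1 : ∏ j ∈ range (r+1), (1 - P ^ (n - (r+1) + 1 + j))
        = (1 - P ^ (n - r)) * ∏ j ∈ range r, (1 - P ^ (n - r + 1 + j)) := by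
      rw [Finset.prod_range_succ', show n - (r+1) + 1 + 0 = n - r from by omega, mul_comm]
      exact congrArg ((1 - P^(n-r)) * ·)
        (Finset.prod_congr rfl fun j _ => by congr 2; omega)
    calc (1 - P^(r+1)) * gb P n (r+1) * ∏ j ∈ range (r+1), (1 - P^(j+1))
        = (1 - P^(r+1)) * ∏ j ∈ range (r+1), (1 - P ^ (n - (r+1) + 1 + j)) := by
          rw [mul_assoc, h1]
      _ = (1 - P^(r+1)) * ((1 - P^(n-r)) * ∏ j ∈ range r, (1 - P ^ (n - r + 1 + j))) := by
          rw [e1]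
      _ = (1 - P^(n-r)) * (gb P n r * ∏ j ∈ range r, (1 - P^(j+1))) * (1 - P^(r+1)) := by
          rw [h2]; ring
      _ = (1 - P^(n-r)) * gb P n r * ∏ j ∈ range (r+1), (1 - P^(j+1)) := by
          rw [Finset.prod_range_succ]; ring
  · -- r ≥ n : both sides are zero
    rw [gb_eq_zero P (by omega), show n - r = 0 from by omega, pow_zero, sub_self,
      zero_mul, mul_zero]

/-- Second q-Pascal identity. -/
lemma gb_pascal2 (n r : ℕ) :
    gb P (n+1) (r+1) = P^(r+1) * gb P n (r+1) + gb P n r := by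
  rw [gb]
  linear_combination gb_balance hP n r

end ThetaAux

namespace Stage4

open ThetaAux

lemma gb_succ_succ (P : ℂ) (n r : ℕ) :
    gb P (n+1) (r+1) = gb P n (r+1) + P^(n-r) * gb P n r := by rw [gb]

variable {P : ℂ} (hP : ∀ j : ℕ, (1 : ℂ) - P ^ (j+1) ≠ 0)
include hP

lemma gb_rec_nat (m s : ℕ) (hs : s ≤ 2*m) :
    gb P (2*m+2) (s+2)
      = (1 + P^(2*m+1)) * gb P (2*m) (s+1) + P^(2*m - s) * gb P (2*m) s
        + P^(s+2) * gb P (2*m) (s+2) := by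
  rcases eq_or_lt_of_le hs with heq | hlt
  · subst heq
    rw [show 2*m+2 = (2*m+1)+1 from by omega, gb_diag,
      gb_eq_zero P (show 2*m < 2*m+1 from by omega),
      gb_eq_zero P (show 2*m < 2*m+1+1 from by omega), gb_diag,
      show 2*m - 2*m = 0 from by omega]
    ring
  · obtain ⟨d, hd⟩ : ∃ d, 2*m = s+1+d := ⟨2*m - (s+1), by omega⟩
    have h1 : gb P (2*m+2) (s+2)
        = P^(s+2) * gb P (2*m+1) (s+2) + gb P (2*m+1) (s+1) := by
      have := gb_pascal2 hP (2*m+1) (s+1)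
      rw [show 2*m+1+1 = 2*m+2 from by omega] at this
      exact this
    have h2 : gb P (2*m+1) (s+2) = gb P (2*m) (s+2) + P^d * gb P (2*m) (s+1) := by
      have := gb_succ_succ P (2*m) (s+1)
      rw [show 2*m - (s+1) = d from by omega] at this
      exact this
    have h3 : gb P (2*m+1) (s+1) = P^(s+1) * gb P (2*m) (s+1) + gb P (2*m) s :=
      gb_pascal2 hP (2*m) s
    have h4 : (1 - P^(s+1)) * gb P (2*m) (s+1) = (1 - P^(d+1)) * gb P (2*m) s := by
      have := gb_balance hP (2*m) s
      rw [show 2*m - s = d + 1 from by omega] at this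
      exact this
    rw [show 2*m - s = d + 1 from by omega, show 2*m+1 = s+2+d from by omega]
    linear_combination h1 + P^(s+2) * h2 + h3 - h4

end Stage4

namespace Stage5
open ThetaAux Stage4

/-- Coefficients of the finite Jacobi triple product. -/
noncomputable def cf (P : ℂ) (m : ℕ) (k : ℤ) : ℂ :=
  if k < -(m:ℤ) then 0 else gb P (2*m) (k + m).toNat

lemma cf_eq_zero_of_lt {P : ℂ} {m : ℕ} {k : ℤ} (h : k < -(m:ℤ)) : cf P m k = 0 := by
  rw [cf, if_pos h]

lemma cf_eq_zero_of_gt {P : ℂ} {m : ℕ} {k : ℤ} (h : (m:ℤ) < k) : cf P m k = 0 := by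
  rw [cf, if_neg (by omega)]
  exact gb_eq_zero P (by omega)

lemma cf_eq {P : ℂ} {m : ℕ} {k : ℤ} (h : -(m:ℤ) ≤ k) :
    cf P m k = gb P (2*m) (k + m).toNat := by
  rw [cf, if_neg (by omega)]

variable {P : ℂ} (hP : ∀ j : ℕ, (1 : ℂ) - P ^ (j+1) ≠ 0)
include hP

lemma cf_rec (m : ℕ) (k : ℤ) :
    cf P (m+1) k = cf P m k * (1 + P^(2*m+1))
      + P ^ ((m:ℤ)+1-k) * cf P m (k-1) + P ^ ((m:ℤ)+1+k) * cf P m (k+1) := by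
  rcases lt_or_ge k (-(m:ℤ)-1) with h1 | h1
  · -- k < -(m+1) : everything vanishes
    rw [cf_eq_zero_of_lt (show k < -((m+1:ℕ):ℤ) from by push_cast; omega),
      cf_eq_zero_of_lt (show k < -(m:ℤ) from by omega),
      cf_eq_zero_of_lt (show k - 1 < -(m:ℤ) from by omega),
      cf_eq_zero_of_lt (show k + 1 < -(m:ℤ) from by omega)]
    ring
  rcases eq_or_lt_of_le h1 with h2 | h2
  · -- k = -(m+1)
    rw [cf_eq (show -((m+1:ℕ):ℤ) ≤ k from by push_cast; omega),
      cf_eq_zero_of_lt (show k < -(m:ℤ) from by omega),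
      cf_eq_zero_of_lt (show k - 1 < -(m:ℤ) from by omega),
      cf_eq (show -(m:ℤ) ≤ k + 1 from by omega),
      show (k + ((m+1:ℕ):ℤ)).toNat = 0 from by push_cast; omega,
      show (k + 1 + (m:ℤ)).toNat = 0 from by omega,
      show (m:ℤ)+1+k = 0 from by omega, zpow_zero, gb_zero_right, gb_zero_right]
    ring
  rcases eq_or_lt_of_le (show -(m:ℤ) ≤ k from by omega) with h3 | h3
  · -- k = -m
    rw [cf_eq (show -((m+1:ℕ):ℤ) ≤ k from by push_cast; omega),
      cf_eq (show -(m:ℤ) ≤ k from by omega),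
      cf_eq_zero_of_lt (show k - 1 < -(m:ℤ) from by omega),
      cf_eq (show -(m:ℤ) ≤ k + 1 from by omega),
      show (k + ((m+1:ℕ):ℤ)).toNat = 1 from by push_cast; omega,
      show (k + (m:ℤ)).toNat = 0 from by omega,
      show (k + 1 + (m:ℤ)).toNat = 1 from by omega,
      show (m:ℤ)+1+k = 1 from by omega, zpow_one, gb_zero_right,
      show 2*(m+1) = (2*m+1)+1 from by omega]
    have e1 : gb P (2*m+1+1) 1 = P^1 * gb P (2*m+1) 1 + gb P (2*m+1) 0 :=
      gb_pascal2 hP (2*m+1) 0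
    have e2 : gb P (2*m+1) 1 = gb P (2*m) 1 + P^(2*m) * gb P (2*m) 0 := by
      have := gb_succ_succ P (2*m) 0
      rw [show 2*m - 0 = 2*m from by omega] at this
      exact this
    rw [gb_zero_right] at e2
    rw [gb_zero_right] at e1
    rw [e1, e2]
    ring
  · -- -m < k : generic case
    have hs' : 0 ≤ k + m - 1 := by omega
    set s : ℕ := (k + m - 1).toNat with hsdef
    have hks : k + m - 1 = (s:ℤ) := by omega
    rw [cf_eq (show -((m+1:ℕ):ℤ) ≤ k from by push_cast; omega),
      cf_eq (show -(m:ℤ) ≤ k from by omega),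
      cf_eq (show -(m:ℤ) ≤ k - 1 from by omega),
      cf_eq (show -(m:ℤ) ≤ k + 1 from by omega),
      show (k + ((m+1:ℕ):ℤ)).toNat = s + 2 from by push_cast; omega,
      show (k + (m:ℤ)).toNat = s + 1 from by omega,
      show (k - 1 + (m:ℤ)).toNat = s from by omega,
      show (k + 1 + (m:ℤ)).toNat = s + 2 from by omega,
      show (m:ℤ)+1+k = ((s:ℤ)+2) from by omega]
    rcases le_or_gt s (2*m) with hs2 | hs2
    · rw [show (m:ℤ)+1-k = ((2*m - s : ℕ) : ℤ) from by push_cast; omega,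
        show ((s:ℤ)+2) = (((s+2:ℕ)):ℤ) from by push_cast; ring,
        zpow_natCast, zpow_natCast, show 2*(m+1) = 2*m+2 from by omega]
      have := gb_rec_nat hP m s hs2
      rw [this]; ring
    · -- s > 2m : all gb's vanish
      rw [gb_eq_zero P (show 2*(m+1) < s+2 from by omega),
        gb_eq_zero P (show 2*m < s+1 from by omega),
        gb_eq_zero P (show 2*m < s from by omega),
        gb_eq_zero P (show 2*m < s+2 from by omega)]
      ring

end Stage5

namespace Stage6
open ThetaAux Stage4 Stage5

lemma summable_support {f : ℤ → ℂ} (N : ℕ) (h : ∀ k ∉ Finset.Icc (-(N:ℤ)) N, f k = 0) :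
    Summable f := summable_of_ne_finset_zero h

variable {p x : ℂ} (hp : p ≠ 0) (hx : x ≠ 0)
  (hP : ∀ j : ℕ, (1 : ℂ) - (p^2) ^ (j+1) ≠ 0)

/-- The summand in the finite Jacobi triple product. -/
noncomputable def Ffun (p x : ℂ) (m : ℕ) (k : ℤ) : ℂ :=
  cf (p^2) m k * (p ^ (k^2) * x ^ k)

lemma Ffun_eq_zero {p x : ℂ} (m : ℕ) : ∀ k ∉ Finset.Icc (-(m:ℤ)) m, Ffun p x m k = 0 := by
  intro k hk
  simp only [Finset.mem_Icc, not_and_or, not_le] at hk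
  rcases hk with h | h
  · rw [Ffun, cf_eq_zero_of_lt h, zero_mul]
  · rw [Ffun, cf_eq_zero_of_gt h, zero_mul]

include hp hx hP in
lemma jtp_fin : ∀ m : ℕ,
    ∏ j ∈ Finset.range m, ((1 + p^(2*j+1) * x) * (1 + p^(2*j+1) * x⁻¹))
      = ∑' k : ℤ, Ffun p x m k
  | 0 => by
      rw [Finset.range_zero, Finset.prod_empty]
      rw [tsum_eq_single 0 (fun k hk => by
        rcases lt_or_gt_of_ne hk with h | h
        · exact (Ffun_eq_zero 0 k (by simp; omega))
        · exact (Ffun_eq_zero 0 k (by simp; omega)))]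
      simp [Ffun, cf, gb_zero_right]
  | (m+1) => by
      have IH := jtp_fin m
      rw [Finset.prod_range_succ, IH]
      set P : ℂ := p^2 with hPdef
      -- the three shifted summands
      set G1 : ℤ → ℂ := fun k => Ffun p x m k * (1 + P^(2*m+1)) with hG1
      set G2 : ℤ → ℂ := fun k => P ^ ((m:ℤ)+1-k) * cf P m (k-1) * (p^(k^2) * x^k) with hG2
      set G3 : ℤ → ℂ := fun k => P ^ ((m:ℤ)+1+k) * cf P m (k+1) * (p^(k^2) * x^k) with hG3
      have hsum1 : Summable G1 := summable_support m (fun k hk => by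
        rw [hG1]; simp only []; rw [Ffun_eq_zero m k hk, zero_mul])
      have hsum2 : Summable G2 := summable_support (m+1) (fun k hk => by
        simp only [Finset.mem_Icc, not_and_or, not_le] at hk
        rw [hG2]; simp only []
        rcases hk with h | h
        · rw [cf_eq_zero_of_lt (show k - 1 < -(m:ℤ) from by push_cast at h ⊢; omega)]
          ring
        · rw [cf_eq_zero_of_gt (show (m:ℤ) < k - 1 from by push_cast at h ⊢; omega)]
          ring)
      have hsum3 : Summable G3 := summable_support (m+1) (fun k hk => by
        simp only [Finset.mem_Icc, not_and_or, not_le] at hk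
        rw [hG3]; simp only []
        rcases hk with h | h
        · rw [cf_eq_zero_of_lt (show k + 1 < -(m:ℤ) from by push_cast at h ⊢; omega)]
          ring
        · rw [cf_eq_zero_of_gt (show (m:ℤ) < k + 1 from by push_cast at h ⊢; omega)]
          ring)
      have hrec : ∀ k : ℤ, Ffun p x (m+1) k = G1 k + G2 k + G3 k := by
        intro k
        rw [Ffun, cf_rec hP m k]
        simp only [hG1, hG2, hG3, Ffun]
        ring
      rw [tsum_congr hrec, (hsum1.add hsum2).tsum_add hsum3, hsum1.tsum_add hsum2]
      -- now evaluate the three sums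
      have e2 : ∑' k : ℤ, G2 k = (∑' k : ℤ, Ffun p x m k) * (p^(2*m+1) * x) := by
        rw [← (Equiv.addRight (1:ℤ)).tsum_eq G2, ← tsum_mul_right]
        apply tsum_congr
        intro j
        simp only [hG2, Equiv.coe_addRight, Ffun]
        have hxp : x ^ (j + 1) = x ^ j * x := zpow_add_one₀ hx j
        have hpp : P ^ ((m:ℤ) + 1 - (j+1)) * p ^ ((j+1)^2) = p ^ (j^2) * p^(2*m+1) := by
          rw [hPdef, ← zpow_natCast p 2, ← zpow_mul, ← zpow_add₀ hp,
            ← zpow_natCast p (2*m+1), ← zpow_add₀ hp]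
          congr 1
          push_cast
          ring
        rw [show (j : ℤ) + 1 - 1 = j from by ring]
        calc P ^ ((m:ℤ)+1-(j+1)) * cf P m j * (p^((j+1)^2) * x^(j+1))
            = (P ^ ((m:ℤ)+1-(j+1)) * p^((j+1)^2)) * cf P m j * x^(j+1) := by ring
          _ = cf P m j * (p^(j^2) * x^j) * (p^(2*m+1) * x) := by rw [hpp, hxp]; ring
      have e3 : ∑' k : ℤ, G3 k = (∑' k : ℤ, Ffun p x m k) * (p^(2*m+1) * x⁻¹) := by
        rw [← (Equiv.subRight (1:ℤ)).tsum_eq G3, ← tsum_mul_right]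
        apply tsum_congr
        intro j
        simp only [hG3, Equiv.subRight_apply, Ffun]
        have hxp : x ^ (j - 1) = x ^ j * x⁻¹ := zpow_sub_one₀ hx j
        have hpp : P ^ ((m:ℤ) + 1 + (j-1)) * p ^ ((j-1)^2) = p ^ (j^2) * p^(2*m+1) := by
          rw [hPdef, ← zpow_natCast p 2, ← zpow_mul, ← zpow_add₀ hp,
            ← zpow_natCast p (2*m+1), ← zpow_add₀ hp]
          congr 1
          push_cast
          ring
        rw [show (j : ℤ) - 1 + 1 = j from by ring]
        calc P ^ ((m:ℤ)+1+(j-1)) * cf P m j * (p^((j-1)^2) * x^(j-1))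
            = (P ^ ((m:ℤ)+1+(j-1)) * p^((j-1)^2)) * cf P m j * x^(j-1) := by ring
          _ = cf P m j * (p^(j^2) * x^j) * (p^(2*m+1) * x⁻¹) := by rw [hpp, hxp]; ring
      have e1 : ∑' k : ℤ, G1 k = (∑' k : ℤ, Ffun p x m k) * (1 + P^(2*m+1)) := by
        rw [← tsum_mul_right]
      rw [e1, e2, e3]
      have hexpand : (1 + p^(2*m+1) * x) * (1 + p^(2*m+1) * x⁻¹)
          = (1 + P^(2*m+1)) + (p^(2*m+1) * x) + (p^(2*m+1) * x⁻¹) := by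
        field_simp [hPdef]
        ring
      rw [hexpand]
      ring

end Stage6

namespace Stage7
open ThetaAux Stage4 Stage5 Stage6 Filter

-- summability of theta-like series
lemma summable_theta_nat {t M : ℝ} (ht : 0 ≤ t) (ht1 : t < 1) (hM : 0 ≤ M) :
    Summable (fun n : ℕ => t^(n^2) * M^n) := by
  rcases eq_or_lt_of_le ht with h0 | h0
  · -- t = 0
    apply (summable_geometric_of_lt_one (by norm_num) (show (1:ℝ)/2 < 1 by norm_num)).of_norm_bounded_eventually_nat
    filter_upwards [eventually_ge_atTop 1] with n hn
    rw [← h0, zero_pow (by positivity), zero_mul, norm_zero]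
    positivity
  · set M' := max M 1 with hM'
    have hM'1 : 1 ≤ M' := le_max_right _ _
    have hM'0 : 0 < M' := lt_of_lt_of_le one_pos hM'1
    obtain ⟨N, hN⟩ : ∃ N, t^N < 1/M' := by
      have := tendsto_pow_atTop_nhds_zero_of_lt_one ht ht1
      have hev := this.eventually_lt_const (show (0:ℝ) < 1/M' by positivity)
      exact hev.exists
    have hr : t^N * M' < 1 := by
      rw [← lt_div_iff₀ hM'0]
      exact hN
    apply (summable_geometric_of_lt_one (by positivity) hr).of_norm_bounded_eventually_nat
    filter_upwards [eventually_ge_atTop N] with n hn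
    rw [Real.norm_of_nonneg (by positivity), mul_pow]
    have h1 : t^(n^2) ≤ (t^N)^n := by
      rw [← pow_mul]
      exact Bound.pow_le_pow_right_of_le_one_or_one_le (Or.inr ⟨ht, le_of_lt ht1, by nlinarith⟩)
    have h2 : M^n ≤ M'^n := pow_le_pow_left₀ hM (le_max_left _ _) n
    have := mul_le_mul h1 h2 (by positivity) (by positivity)
    exact this

lemma summable_norm_pkx {p x : ℂ} (hp : p ≠ 0) (hpn : ‖p‖ < 1) (hx : x ≠ 0) :
    Summable (fun k : ℤ => ‖p ^ (k^2) * x ^ k‖) := by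
  have hp0 : 0 < ‖p‖ := norm_pos_iff.2 hp
  have hx0 : 0 < ‖x‖ := norm_pos_iff.2 hx
  apply Summable.of_nat_of_neg
  · apply ((summable_theta_nat (le_of_lt hp0) hpn (le_of_lt hx0))).congr
    intro n
    rw [norm_mul, norm_zpow, norm_zpow]
    rw [show ((n:ℤ)^2) = ((n^2 : ℕ) : ℤ) from by push_cast; ring, zpow_natCast,
      show ((n:ℤ)) = ((n : ℕ) : ℤ) from rfl, zpow_natCast]
  · apply ((summable_theta_nat (le_of_lt hp0) hpn (show (0:ℝ) ≤ ‖x‖⁻¹ by positivity))).congr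
    intro n
    rw [norm_mul, norm_zpow, norm_zpow]
    rw [show ((-n:ℤ)^2) = ((n^2 : ℕ) : ℤ) from by push_cast; ring, zpow_natCast, zpow_neg,
      show ((n:ℤ)) = ((n : ℕ) : ℤ) from rfl, zpow_natCast, ← inv_pow]

end Stage7

namespace Stage8
open ThetaAux Stage4 Stage5 Stage6 Stage7 Filter Finset

lemma one_sub_pow_ne {P : ℂ} (hPn : ‖P‖ < 1) (j : ℕ) : (1:ℂ) - P^(j+1) ≠ 0 := by
  have h : ‖-(P^(j+1))‖ < 1 := by
    rw [norm_neg, norm_pow]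
    exact pow_lt_one₀ (norm_nonneg P) hPn (by omega)
  have := one_add_ne_zero_of_norm_lt h
  simpa [sub_eq_add_neg] using this

lemma summable_pow_succ {P : ℂ} (hPn : ‖P‖ < 1) : Summable (fun j : ℕ => -(P^(j+1))) := by
  apply (summable_cq hPn (-1) 1 1 one_ne_zero).congr
  intro n; rw [one_mul]; ring

lemma multipliable_one_sub_pow {P : ℂ} (hPn : ‖P‖ < 1) :
    Multipliable (fun j : ℕ => 1 - P^(j+1)) := by
  apply (multipliable_one_add (summable_pow_succ hPn)
    (fun j => by simpa [sub_eq_add_neg] using one_sub_pow_ne hPn j)).congr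
  intro n; ring

lemma tprod_one_sub_pow_ne {P : ℂ} (hPn : ‖P‖ < 1) :
    (∏' j : ℕ, (1 - P^(j+1))) ≠ 0 := by
  have h := tprod_one_add_ne_zero (summable_pow_succ hPn)
    (fun j => by simpa [sub_eq_add_neg] using one_sub_pow_ne hPn j)
  have e : (∏' j : ℕ, (1 + -(P^(j+1)))) = ∏' j : ℕ, (1 - P^(j+1)) :=
    tprod_congr (fun n => by ring)
  rwa [e] at h

lemma exp_aux {t u : ℝ} (hu0 : 0 ≤ u) (hut : u ≤ t) (ht : t < 1) :
    Real.exp (-(u/(1-t))) ≤ 1 - u := by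
  have h1t : 0 < 1 - t := by linarith
  have h1u : 0 < 1 - u := by linarith
  have key : 1/(1-u) ≤ Real.exp (u/(1-t)) := by
    have h2 : u/(1-u) ≤ u/(1-t) := by gcongr <;> linarith
    calc 1/(1-u) = 1 + u/(1-u) := by field_simp; ring
      _ ≤ 1 + u/(1-t) := by linarith
      _ ≤ Real.exp (u/(1-t)) := by linarith [Real.add_one_le_exp (u/(1-t))]
  calc Real.exp (-(u/(1-t))) = (Real.exp (u/(1-t)))⁻¹ := Real.exp_neg _
    _ ≤ (1/(1-u))⁻¹ := by
        apply inv_anti₀ (by positivity) key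
    _ = 1 - u := by field_simp

variable {P : ℂ} (hPn : ‖P‖ < 1)
include hPn

lemma Dfin_ne (r : ℕ) : (∏ j ∈ range r, ((1:ℂ) - P^(j+1))) ≠ 0 :=
  Finset.prod_ne_zero_iff.2 fun j _ => one_sub_pow_ne hPn j

lemma cf_formula (m : ℕ) (k : ℤ) (hk : k.natAbs ≤ m) :
    cf P m k = (∏ j ∈ range (2*m), (1 - P^(j+1)))
      * (∏ j ∈ range ((k + m).toNat), (1 - P^(j+1)))⁻¹
      * (∏ j ∈ range (((m:ℤ) - k).toNat), (1 - P^(j+1)))⁻¹ := by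
  set r := (k + m).toNat with hr
  set b := ((m:ℤ) - k).toNat with hb
  have hbr : b + r = 2*m := by omega
  have hF4 := gb_mul_prod P (2*m) r (by omega)
  have hsplit : (∏ j ∈ range (2*m), ((1:ℂ) - P^(j+1)))
      = (∏ j ∈ range b, (1 - P^(j+1))) * ∏ j ∈ range r, (1 - P^(2*m - r + 1 + j)) := by
    rw [← hbr, Finset.prod_range_add]
    congr 1
    exact Finset.prod_congr rfl fun j _ => by congr 2; omega
  rw [cf_eq (show -(m:ℤ) ≤ k from by omega), ← hr]
  have h1 := Dfin_ne hPn r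
  have h2 := Dfin_ne hPn b
  field_simp
  rw [hF4, hsplit]
  ring

lemma cf_tendsto (k : ℤ) :
    Tendsto (fun m : ℕ => cf P m k) atTop (𝓝 (∏' j : ℕ, (1 - P^(j+1)))⁻¹) := by
  set E := ∏' j : ℕ, ((1:ℂ) - P^(j+1)) with hE
  have hE0 : E ≠ 0 := tprod_one_sub_pow_ne hPn
  have hD : Tendsto (fun t : ℕ => ∏ j ∈ range t, ((1:ℂ) - P^(j+1))) atTop (𝓝 E) :=
    (multipliable_one_sub_pow hPn).hasProd.tendsto_prod_nat
  have t1 : Tendsto (fun m : ℕ => 2*m) atTop atTop :=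
    tendsto_atTop_atTop.2 fun b => ⟨b, fun m hm => by omega⟩
  have t2 : Tendsto (fun m : ℕ => ((k : ℤ) + m).toNat) atTop atTop :=
    tendsto_atTop_atTop.2 fun b => ⟨b + k.natAbs, fun m hm => by omega⟩
  have t3 : Tendsto (fun m : ℕ => ((m : ℤ) - k).toNat) atTop atTop :=
    tendsto_atTop_atTop.2 fun b => ⟨b + k.natAbs, fun m hm => by omega⟩
  have hmain : Tendsto (fun m : ℕ =>
      (∏ j ∈ range (2*m), ((1:ℂ) - P^(j+1)))
      * (∏ j ∈ range (((k:ℤ) + m).toNat), ((1:ℂ) - P^(j+1)))⁻¹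
      * (∏ j ∈ range (((m:ℤ) - k).toNat), ((1:ℂ) - P^(j+1)))⁻¹) atTop
      (𝓝 (E * E⁻¹ * E⁻¹)) :=
    ((hD.comp t1).mul ((hD.comp t2).inv₀ hE0)).mul ((hD.comp t3).inv₀ hE0)
  have heq : E * E⁻¹ * E⁻¹ = E⁻¹ := by field_simp
  rw [heq] at hmain
  apply hmain.congr'
  filter_upwards [eventually_ge_atTop k.natAbs] with m hm
  exact (cf_formula hPn m k hm).symm

lemma cf_bound : ∃ C : ℝ, 0 < C ∧ ∀ (m : ℕ) (k : ℤ), ‖cf P m k‖ ≤ C := by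
  set t := ‖P‖ with hts
  have ht0 : 0 ≤ t := norm_nonneg P
  have hgeo : Summable (fun j : ℕ => t^(j+1)) := by
    apply ((summable_geometric_of_lt_one ht0 hPn).mul_left t).congr
    intro n; rw [← pow_succ']
  have hgeo2 : Summable (fun j : ℕ => t^(j+1)/(1-t)) := hgeo.div_const _
  set S1 := ∑' j : ℕ, t^(j+1) with hS1
  set S2 := ∑' j : ℕ, t^(j+1)/(1-t) with hS2
  refine ⟨Real.exp (S1 + S2), Real.exp_pos _, fun m k => ?_⟩
  rcases le_or_gt k.natAbs m with hk | hk
  · -- the interesting case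
    set r := (k + m).toNat with hr
    have hrange : r ≤ 2*m := by omega
    have hF4 := gb_mul_prod P (2*m) r hrange
    have hupper : ‖∏ j ∈ range r, ((1:ℂ) - P^(2*m - r + 1 + j))‖ ≤ Real.exp S1 := by
      rw [norm_prod]
      calc ∏ j ∈ range r, ‖(1:ℂ) - P^(2*m - r + 1 + j)‖
          ≤ ∏ j ∈ range r, Real.exp (t^(j+1)) := by
            apply Finset.prod_le_prod (fun j _ => norm_nonneg _)
            intro j _
            calc ‖(1:ℂ) - P^(2*m - r + 1 + j)‖ ≤ 1 + ‖P^(2*m-r+1+j)‖ := by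
                  simpa using norm_sub_le (1:ℂ) (P^(2*m-r+1+j))
              _ = 1 + t^(2*m-r+1+j) := by rw [norm_pow]
              _ ≤ 1 + t^(j+1) := by
                  have : t^(2*m-r+1+j) ≤ t^(j+1) :=
                    Bound.pow_le_pow_right_of_le_one_or_one_le
                      (Or.inr ⟨ht0, le_of_lt hPn, by omega⟩)
                  linarith
              _ ≤ Real.exp (t^(j+1)) := by linarith [Real.add_one_le_exp (t^(j+1))]
        _ = Real.exp (∑ j ∈ range r, t^(j+1)) := (Real.exp_sum _ _).symm
        _ ≤ Real.exp S1 := by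
            apply Real.exp_le_exp.2
            exact hgeo.sum_le_tsum (range r) (fun j _ => by positivity)
    have hlower : Real.exp (-S2) ≤ ‖∏ j ∈ range r, ((1:ℂ) - P^(j+1))‖ := by
      rw [norm_prod]
      calc Real.exp (-S2) ≤ Real.exp (-(∑ j ∈ range r, t^(j+1)/(1-t))) := by
            apply Real.exp_le_exp.2
            have := hgeo2.sum_le_tsum (range r)
              (fun j _ => div_nonneg (by positivity) (by linarith))
            linarith
        _ = ∏ j ∈ range r, Real.exp (-(t^(j+1)/(1-t))) := by
            rw [← Real.exp_sum, ← Finset.sum_neg_distrib]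
        _ ≤ ∏ j ∈ range r, ‖(1:ℂ) - P^(j+1)‖ := by
            apply Finset.prod_le_prod (fun j _ => le_of_lt (Real.exp_pos _))
            intro j _
            have hu : t^(j+1) ≤ t := by
              calc t^(j+1) ≤ t^1 := Bound.pow_le_pow_right_of_le_one_or_one_le
                    (Or.inr ⟨ht0, le_of_lt hPn, by omega⟩)
                _ = t := pow_one t
            calc Real.exp (-(t^(j+1)/(1-t))) ≤ 1 - t^(j+1) :=
                  exp_aux (by positivity) hu hPn
              _ = 1 - ‖P^(j+1)‖ := by rw [norm_pow]
              _ ≤ ‖(1:ℂ) - P^(j+1)‖ := by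
                  have := norm_sub_norm_le (1:ℂ) (P^(j+1))
                  simpa using this
    -- combine
    rw [cf_eq (show -(m:ℤ) ≤ k from by omega), ← hr]
    have hnorm : ‖gb P (2*m) r‖ * ‖∏ j ∈ range r, ((1:ℂ) - P^(j+1))‖ ≤ Real.exp S1 := by
      rw [← norm_mul, hF4]; exact hupper
    have hpos : (0:ℝ) < Real.exp (-S2) := Real.exp_pos _
    have hdiv : ‖gb P (2*m) r‖ ≤ Real.exp S1 / Real.exp (-S2) := by
      rw [le_div_iff₀ hpos]
      calc ‖gb P (2*m) r‖ * Real.exp (-S2)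
          ≤ ‖gb P (2*m) r‖ * ‖∏ j ∈ range r, ((1:ℂ) - P^(j+1))‖ :=
            mul_le_mul_of_nonneg_left hlower (norm_nonneg _)
        _ ≤ Real.exp S1 := hnorm
    calc ‖gb P (2*m) r‖ ≤ Real.exp S1 / Real.exp (-S2) := hdiv
      _ = Real.exp S1 * Real.exp S2 := by rw [Real.exp_neg]; field_simp
      _ = Real.exp (S1 + S2) := (Real.exp_add S1 S2).symm
  · -- out of range: cf = 0
    rcases le_or_gt k 0 with hneg | hpos
    · rw [cf_eq_zero_of_lt (show k < -(m:ℤ) from by omega), norm_zero]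
      positivity
    · rw [cf_eq_zero_of_gt (show (m:ℤ) < k from by omega), norm_zero]
      positivity

end Stage8

namespace Stage9
open ThetaAux Stage4 Stage5 Stage6 Stage7 Stage8 Filter Topology Finset

theorem triple_product {p x : ℂ} (hp : p ≠ 0) (hpn : ‖p‖ < 1) (hx : x ≠ 0)
    (hz1 : ∀ n : ℕ, 1 + p^(2*n+1) * x ≠ 0) (hz2 : ∀ n : ℕ, 1 + p^(2*n+1) * x⁻¹ ≠ 0) :
    (∏' j : ℕ, (1 - (p^2)^(j+1)))
      * ((∏' n : ℕ, (1 + p^(2*n+1) * x)) * (∏' n : ℕ, (1 + p^(2*n+1) * x⁻¹)))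
      = ∑' k : ℤ, p^(k^2) * x^k := by
  have hPn : ‖p^2‖ < 1 := by
    rw [norm_pow]; exact pow_lt_one₀ (norm_nonneg p) hpn two_ne_zero
  have hP := fun j => one_sub_pow_ne hPn j
  have hs1 : Summable (fun n : ℕ => p^(2*n+1) * x) := by
    apply (summable_cq hpn x 2 1 two_ne_zero).congr
    intro n; rw [mul_comm]
  have hs2 : Summable (fun n : ℕ => p^(2*n+1) * x⁻¹) := by
    apply (summable_cq hpn x⁻¹ 2 1 two_ne_zero).congr
    intro n; rw [mul_comm]
  have hm1 : Multipliable (fun n : ℕ => 1 + p^(2*n+1) * x) := multipliable_one_add hs1 hz1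
  have hm2 : Multipliable (fun n : ℕ => 1 + p^(2*n+1) * x⁻¹) := multipliable_one_add hs2 hz2
  have hL : Tendsto (fun m : ℕ => ∏ j ∈ range m, ((1 + p^(2*j+1) * x) * (1 + p^(2*j+1) * x⁻¹)))
      atTop (𝓝 ((∏' n : ℕ, (1 + p^(2*n+1) * x)) * ∏' n : ℕ, (1 + p^(2*n+1) * x⁻¹))) := by
    have h := (hm1.hasProd.tendsto_prod_nat).mul (hm2.hasProd.tendsto_prod_nat)
    apply h.congr
    intro m
    rw [← Finset.prod_mul_distrib]
  obtain ⟨C, hC0, hC⟩ := cf_bound hPn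
  have hbsum : Summable (fun k : ℤ => C * ‖p^(k^2) * x^k‖) :=
    (summable_norm_pkx hp hpn hx).mul_left C
  have hR : Tendsto (fun m : ℕ => ∑' k : ℤ, Ffun p x m k) atTop
      (𝓝 (∑' k : ℤ, (∏' j : ℕ, ((1:ℂ) - (p^2)^(j+1)))⁻¹ * (p^(k^2) * x^k))) := by
    apply tendsto_tsum_of_dominated_convergence hbsum
    · intro k
      have h := (cf_tendsto hPn k).mul_const (p^(k^2) * x^k)
      simpa [Ffun] using h
    · filter_upwards with m
      intro k
      rw [Ffun, norm_mul]
      exact mul_le_mul_of_nonneg_right (hC m k) (norm_nonneg _)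
  have key := tendsto_nhds_unique (hL.congr (jtp_fin hp hx hP)) hR
  rw [key, tsum_mul_left, ← mul_assoc,
    mul_inv_cancel₀ (tprod_one_sub_pow_ne hPn), one_mul]

end Stage9

namespace Stage10
open ThetaAux Stage8 Topology

variable {q : ℂ} (hq : ‖q‖ < 1)
include hq

lemma mult_gen {c : ℂ} (hc : ‖c‖ ≤ 1) (a b : ℕ) (ha : a ≠ 0) (hb : b ≠ 0) :
    Multipliable (fun n : ℕ => 1 + c * q^(a*n+b))
      ∧ (∏' n : ℕ, (1 + c * q^(a*n+b))) ≠ 0 := by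
  have hnz : ∀ n : ℕ, (1:ℂ) + c * q^(a*n+b) ≠ 0 := fun n => one_add_ne_zero_of_norm_lt (by
    rw [norm_mul, norm_pow]
    calc ‖c‖ * ‖q‖^(a*n+b) ≤ 1 * ‖q‖^(a*n+b) :=
        mul_le_mul_of_nonneg_right hc (by positivity)
      _ = ‖q‖^(a*n+b) := one_mul _
      _ < 1 := pow_lt_one₀ (norm_nonneg q) hq (by omega))
  exact ⟨multipliable_one_add (summable_cq hq c a b ha) hnz,
    tprod_one_add_ne_zero (summable_cq hq c a b ha) hnz⟩

lemma multm (a b : ℕ) (ha : a ≠ 0) (hb : b ≠ 0) :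
    Multipliable (fun n : ℕ => 1 - q^(a*n+b))
      ∧ (∏' n : ℕ, (1 - q^(a*n+b))) ≠ 0 := by
  obtain ⟨h1, h2⟩ := mult_gen hq (show ‖(-1 : ℂ)‖ ≤ 1 by simp) a b ha hb
  have e : ∀ n : ℕ, (1:ℂ) + (-1) * q^(a*n+b) = 1 - q^(a*n+b) := fun n => by ring
  rw [tprod_congr e] at h2
  exact ⟨h1.congr e, h2⟩

lemma multp (a b : ℕ) (ha : a ≠ 0) (hb : b ≠ 0) :
    Multipliable (fun n : ℕ => 1 + q^(a*n+b))
      ∧ (∏' n : ℕ, (1 + q^(a*n+b))) ≠ 0 := by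
  obtain ⟨h1, h2⟩ := mult_gen hq (show ‖(1 : ℂ)‖ ≤ 1 by simp) a b ha hb
  have e : ∀ n : ℕ, (1:ℂ) + 1 * q^(a*n+b) = 1 + q^(a*n+b) := fun n => by ring
  rw [tprod_congr e] at h2
  exact ⟨h1.congr e, h2⟩

lemma prodIdent :
    (∏' n:ℕ, (1 - q^(2*n+2)))^2 / (∏' n:ℕ, (1 - q^(n+1)))
      = (∏' n:ℕ, (1 - q^(4*n+4)))
        * ((∏' n:ℕ, (1 + q^(4*n+3))) * (∏' n:ℕ, (1 + q^(4*n+1)))) := by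
  obtain ⟨mA, hA⟩ := multm hq 2 2 two_ne_zero two_ne_zero
  obtain ⟨mC, hC⟩ := multm hq 2 1 two_ne_zero one_ne_zero
  obtain ⟨mD, hD⟩ := multm hq 4 4 four_ne_zero four_ne_zero
  obtain ⟨mE, hE⟩ := multm hq 4 2 four_ne_zero two_ne_zero
  obtain ⟨mF1, hF1⟩ := multp hq 4 1 four_ne_zero one_ne_zero
  obtain ⟨mF3, hF3⟩ := multp hq 4 3 four_ne_zero three_ne_zero
  obtain ⟨mG, hG⟩ := multp hq 2 1 two_ne_zero one_ne_zero
  set A := ∏' n:ℕ, ((1:ℂ) - q^(2*n+2)) with hAd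
  set B := ∏' n:ℕ, ((1:ℂ) - q^(n+1)) with hBd
  set Cq := ∏' n:ℕ, ((1:ℂ) - q^(2*n+1)) with hCd
  set Dq := ∏' n:ℕ, ((1:ℂ) - q^(4*n+4)) with hDd
  set Eq := ∏' n:ℕ, ((1:ℂ) - q^(4*n+2)) with hEd
  set F1 := ∏' n:ℕ, ((1:ℂ) + q^(4*n+1)) with hF1d
  set F3 := ∏' n:ℕ, ((1:ℂ) + q^(4*n+3)) with hF3d
  set G := ∏' n:ℕ, ((1:ℂ) + q^(2*n+1)) with hGd
  -- I1 : B = Cq * A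
  have hI1 : B = Cq * A := by
    rw [hBd, hCd, hAd]
    rw [← tprod_even_mul_odd (f := fun n : ℕ => (1:ℂ) - q^(n+1))
      (by exact mC.congr (fun k => by rw [show 2*k+1 = 2*k+1 from rfl]))
      (by exact mA.congr (fun k => by rw [show 2*k+2 = 2*k+1+1 from rfl]))]
  -- I4 : A = Eq * Dq
  have hI4 : A = Eq * Dq := by
    rw [hAd, hEd, hDd]
    rw [← tprod_even_mul_odd (f := fun n : ℕ => (1:ℂ) - q^(2*n+2))
      (by exact mE.congr (fun k => by rw [show 4*k+2 = 2*(2*k)+2 from by omega]))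
      (by exact mD.congr (fun k => by rw [show 4*k+4 = 2*(2*k+1)+2 from by omega]))]
    congr 1
    · exact tprod_congr fun k => by rw [show 2*(2*k)+2 = 4*k+2 from by omega]
    · exact tprod_congr fun k => by rw [show 2*(2*k+1)+2 = 4*k+4 from by omega]
  -- I2 : G = F1 * F3
  have hI2 : G = F1 * F3 := by
    rw [hGd, hF1d, hF3d]
    rw [← tprod_even_mul_odd (f := fun n : ℕ => (1:ℂ) + q^(2*n+1))
      (by exact mF1.congr (fun k => by rw [show 4*k+1 = 2*(2*k)+1 from by omega]))
      (by exact mF3.congr (fun k => by rw [show 4*k+3 = 2*(2*k+1)+1 from by omega]))]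
    congr 1
    · exact tprod_congr fun k => by rw [show 2*(2*k)+1 = 4*k+1 from by omega]
    · exact tprod_congr fun k => by rw [show 2*(2*k+1)+1 = 4*k+3 from by omega]
  -- I3 : G * Cq = Eq
  have hI3 : G * Cq = Eq := by
    rw [hGd, hCd, hEd, ← mG.tprod_mul mC]
    exact tprod_congr fun n => by ring
  calc A^2 / B = A^2 / (Cq * A) := by rw [hI1]
    _ = A / Cq := by
        rw [pow_two]
        rw [mul_comm Cq A, ← div_div, mul_div_assoc, div_self hA, mul_one]
    _ = (Eq * Dq) / Cq := by rw [← hI4]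
    _ = (G * Cq * Dq) / Cq := by rw [hI3]
    _ = Dq * G := by
        rw [div_eq_iff hC]; ring
    _ = Dq * (F3 * F1) := by rw [hI2, mul_comm F1 F3]

end Stage10


open Complex Real

/-- The Dedekind eta function `η(τ) = e^{πiτ/12} ∏_{n≥1} (1 - e^{2πinτ})`. -/
noncomputable def dedekindEta (τ : ℂ) : ℂ :=
  Complex.exp (π * Complex.I * τ / 12) *
    ∏' n : ℕ, (1 - Complex.exp (2 * π * Complex.I * ((n : ℂ) + 1) * τ))

/-- `θ_Δ(τ) = η(τ)²/η(τ/2)`. -/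
noncomputable def thetaTriangle (τ : ℂ) : ℂ :=
  dedekindEta τ ^ 2 / dedekindEta (τ / 2)

namespace ThetaAux
namespace Stage11

lemma norm_q_lt_one {τ : ℂ} (hτ : 0 < τ.im) : ‖cexp (↑π * I * τ)‖ < 1 := by
  rw [Complex.norm_exp]
  rw [show (↑π * I * τ).re = -(π * τ.im) from by simp [Complex.mul_re, Complex.mul_im]]
  rw [Real.exp_lt_one_iff]
  nlinarith [Real.pi_pos]

lemma dedekindEta_eq (τ : ℂ) :
    dedekindEta τ = cexp (↑π*I*τ/12) * ∏' n:ℕ, (1 - (cexp (↑π*I*τ))^(2*n+2)) := by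
  rw [dedekindEta]
  congr 1
  exact tprod_congr fun n => by
    congr 1
    rw [← Complex.exp_nat_mul]
    congr 1
    push_cast
    ring

lemma dedekindEta_half_eq (τ : ℂ) :
    dedekindEta (τ/2) = cexp (↑π*I*τ/24) * ∏' n:ℕ, (1 - (cexp (↑π*I*τ))^(n+1)) := by
  rw [dedekindEta]
  congr 1
  · congr 1
    ring
  · exact tprod_congr fun n => by
      congr 1
      rw [← Complex.exp_nat_mul]
      congr 1
      push_cast
      ring

lemma thetaTriangle_eq_theta2 {τ : ℂ} (hτ : 0 < τ.im) :
    thetaTriangle τ = cexp (↑π*I*τ/8) * jacobiTheta₂ (τ/2) (2*τ) := by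
  set q : ℂ := cexp (↑π*I*τ) with hqd
  have hq0 : q ≠ 0 := Complex.exp_ne_zero _
  have hqn : ‖q‖ < 1 := norm_q_lt_one hτ
  have hlt : ∀ b : ℕ, b ≠ 0 → ‖q ^ b‖ < 1 := fun b hb => by
    rw [norm_pow]; exact pow_lt_one₀ (norm_nonneg q) hqn hb
  -- step 1: theta = e^{πiτ/8} (A²/B)
  have step1 : thetaTriangle τ
      = cexp (↑π*I*τ/8) * ((∏' n:ℕ, (1 - q^(2*n+2)))^2 / (∏' n:ℕ, (1 - q^(n+1)))) := by
    rw [thetaTriangle, dedekindEta_eq, dedekindEta_half_eq, mul_pow, mul_div_mul_comm, ← hqd]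
    congr 1
    rw [sq, ← Complex.exp_add, ← Complex.exp_sub]
    congr 1
    ring
  -- step 2: jacobiTheta₂ as a q-series
  have step2 : jacobiTheta₂ (τ/2) (2*τ) = ∑' k:ℤ, (q^2)^(k^2) * q^k := by
    rw [jacobiTheta₂]
    exact tsum_congr fun n => by
      rw [jacobiTheta₂_term,
        show 2*↑π*I*n*(τ/2) + ↑π*I*n^2*(2*τ) = ((2*n^2 + n : ℤ):ℂ) * (↑π*I*τ) from by
          push_cast; ring,
        Complex.exp_int_mul, ← hqd]
      rw [← zpow_natCast q 2, ← zpow_mul, ← zpow_add₀ hq0]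
      congr 1 <;> ring
  -- step 3: triple product
  have hz1 : ∀ n : ℕ, 1 + (q^2)^(2*n+1) * q ≠ 0 := fun n => by
    rw [← pow_mul, ← pow_succ]
    exact one_add_ne_zero_of_norm_lt (hlt _ (by omega))
  have hz2 : ∀ n : ℕ, 1 + (q^2)^(2*n+1) * q⁻¹ ≠ 0 := fun n => by
    rw [← pow_mul, show 2*(2*n+1) = (4*n+1)+1 from by omega, pow_succ,
      mul_inv_cancel_right₀ hq0]
    exact one_add_ne_zero_of_norm_lt (hlt _ (by omega))
  have hTP := Stage9.triple_product (p := q^2) (x := q) (pow_ne_zero 2 hq0)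
    (hlt 2 two_ne_zero) hq0 hz1 hz2
  have c1 : (∏' j:ℕ, (1 - ((q^2)^2)^(j+1))) = ∏' n:ℕ, (1 - q^(4*n+4)) :=
    tprod_congr fun j => by rw [← pow_mul, ← pow_mul]; congr 2; omega
  have c2 : (∏' n:ℕ, (1 + (q^2)^(2*n+1) * q)) = ∏' n:ℕ, (1 + q^(4*n+3)) :=
    tprod_congr fun n => by
      rw [← pow_mul, ← pow_succ]
      congr 2
      omega
  have c3 : (∏' n:ℕ, (1 + (q^2)^(2*n+1) * q⁻¹)) = ∏' n:ℕ, (1 + q^(4*n+1)) :=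
    tprod_congr fun n => by
      rw [← pow_mul, show 2*(2*n+1) = (4*n+1)+1 from by omega, pow_succ,
        mul_inv_cancel_right₀ hq0]
  rw [c1, c2, c3] at hTP
  rw [step1, step2, Stage10.prodIdent hqn, hTP]

end Stage11
end ThetaAux

namespace Stage12
open ThetaAux

/-- Shifting `τ` by 1 shifts `z` by 1/2. -/
lemma theta_shift (z τ : ℂ) : jacobiTheta₂ z (τ + 1) = jacobiTheta₂ (z + 1/2) τ := by
  rw [jacobiTheta₂, jacobiTheta₂]
  refine tsum_congr fun n => ?_
  rw [jacobiTheta₂_term, jacobiTheta₂_term]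
  obtain ⟨c, hc⟩ : ∃ c : ℤ, (n:ℤ)^2 - n = 2*c := by
    have h := Int.even_mul_succ_self (n - 1)
    obtain ⟨c, hc⟩ := h
    exact ⟨c, by linarith [hc]⟩
  have hc2 : ((n:ℂ))^2 - n = 2*(c:ℂ) := by exact_mod_cast congrArg (Int.cast : ℤ → ℂ) hc
  rw [show 2*↑π*I*n*z + ↑π*I*n^2*(τ+1)
      = (2*↑π*I*n*(z+1/2) + ↑π*I*n^2*τ) + (↑c * (2*↑π*I)) from by
    linear_combination (↑π * I) * hc2]
  rw [Complex.exp_add, Complex.exp_int_mul_two_pi_mul_I, mul_one]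

lemma re_cpow_half_pos {a : ℂ} (ha : a ∈ Complex.slitPlane) :
    0 < (a ^ ((1:ℂ)/2)).re := by
  have ha0 : a ≠ 0 := Complex.slitPlane_ne_zero ha
  rw [Complex.cpow_def_of_ne_zero ha0, Complex.exp_re]
  apply mul_pos (Real.exp_pos _)
  apply Real.cos_pos_of_mem_Ioo
  have him : (Complex.log a * (1/2)).im = a.arg / 2 := by
    rw [Complex.mul_im]
    simp [Complex.log_im]
    ring
  rw [him]
  have h1 : -π < a.arg := Complex.neg_pi_lt_arg a
  have h2 : a.arg < π := by
    rcases lt_or_eq_of_le (Complex.arg_le_pi a) with h | h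
    · exact h
    · exact absurd h ((Complex.mem_slitPlane_iff_arg.1 ha).1 ∘ id)
  exact Set.mem_Ioo.2 ⟨by linarith, by linarith⟩

lemma cpow_half_mul {a b : ℂ} (ha : 0 < a.re) (hb : 0 < b.re)
    (hab : a * b ∈ Complex.slitPlane) :
    (a * b) ^ ((1:ℂ)/2) = a ^ ((1:ℂ)/2) * b ^ ((1:ℂ)/2) := by
  have ha0 : a ≠ 0 := fun h => by rw [h] at ha; simp at ha
  have hb0 : b ≠ 0 := fun h => by rw [h] at hb; simp at hb
  have hsq : ∀ c : ℂ, c ≠ 0 → (c ^ ((1:ℂ)/2))^2 = c := fun c hc => by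
    rw [sq, ← Complex.cpow_add _ _ hc]
    norm_num
  have hXre : 0 < (a ^ ((1:ℂ)/2) * b ^ ((1:ℂ)/2)).re := by
    rw [Complex.cpow_def_of_ne_zero ha0, Complex.cpow_def_of_ne_zero hb0,
      ← Complex.exp_add, Complex.exp_re]
    apply mul_pos (Real.exp_pos _)
    apply Real.cos_pos_of_mem_Ioo
    have him : (Complex.log a * (1/2) + Complex.log b * (1/2)).im
        = a.arg/2 + b.arg/2 := by
      rw [Complex.add_im, Complex.mul_im, Complex.mul_im]
      simp [Complex.log_im]
      ring
    rw [him]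
    have h1 : |a.arg| < π/2 := Complex.abs_arg_lt_pi_div_two_iff.2 (Or.inl ha)
    have h2 : |b.arg| < π/2 := Complex.abs_arg_lt_pi_div_two_iff.2 (Or.inl hb)
    rw [abs_lt] at h1 h2
    exact Set.mem_Ioo.2 ⟨by linarith [h1.1, h2.1], by linarith [h1.2, h2.2]⟩
  have hYre : 0 < ((a*b) ^ ((1:ℂ)/2)).re := re_cpow_half_pos hab
  have hfac : ((a*b) ^ ((1:ℂ)/2) - a ^ ((1:ℂ)/2) * b ^ ((1:ℂ)/2))
      * ((a*b) ^ ((1:ℂ)/2) + a ^ ((1:ℂ)/2) * b ^ ((1:ℂ)/2)) = 0 := by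
    have h1 := hsq (a*b) (mul_ne_zero ha0 hb0)
    have h2 := hsq a ha0
    have h3 := hsq b hb0
    linear_combination h1 - b * h2 - (a^((1:ℂ)/2))^2 * h3
  rcases mul_eq_zero.1 hfac with h | h
  · exact sub_eq_zero.1 h
  · exfalso
    have : ((a*b) ^ ((1:ℂ)/2) + a ^ ((1:ℂ)/2) * b ^ ((1:ℂ)/2)).re > 0 := by
      rw [Complex.add_re]; linarith
    rw [h] at this
    simp at this

end Stage12

namespace Stage13
open ThetaAux Stage11 Stage12

lemma solveFE {cv e1 e2 T S : ℂ} (hcv : cv ≠ 0) (he : e1 * e2 = 1)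
    (h : S = 1/cv * e2 * T) : T = cv * e1 * S := by
  rw [h]
  have h2 : cv * e1 * (1/cv * e2 * T) = (e1 * e2) * T := by
    field_simp
  rw [h2, he, one_mul]

lemma partB {τ : ℂ} (hτ : 0 < τ.im) :
    cexp (↑π*I*(τ/(2*τ+1))/8) * jacobiTheta₂ ((τ/(2*τ+1))/2) (2*(τ/(2*τ+1)))
      = (2*τ+1) ^ ((1:ℂ)/2) * (cexp (↑π*I*τ/8) * jacobiTheta₂ (τ/2) (2*τ)) := by
  have hτ0 : τ ≠ 0 := fun h => by rw [h] at hτ; simp at hτ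
  set s : ℂ := 2*τ+1 with hs
  have hs_im : 0 < s.im := by
    rw [hs]
    simp [Complex.add_im, Complex.mul_im]
    exact hτ
  have hs0 : s ≠ 0 := fun h => by rw [h] at hs_im; simp at hs_im
  set u : ℂ := 2*τ with hu
  have hu_im : 0 < u.im := by
    rw [hu]; simp [Complex.mul_im]; exact hτ
  have hu0 : u ≠ 0 := fun h => by rw [h] at hu_im; simp at hu_im
  set w : ℂ := -1/u with hw
  have hw_im : 0 < w.im := by
    rw [hw, neg_div, neg_im, one_div, Complex.inv_im, neg_div, neg_neg]
    exact div_pos hu_im (Complex.normSq_pos.2 hu0)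
  set v : ℂ := w - 1 with hv
  have hv_im : 0 < v.im := by
    rw [hv, Complex.sub_im, Complex.one_im, sub_zero]; exact hw_im
  have hv0 : v ≠ 0 := fun h => by rw [h] at hv_im; simp at hv_im
  have hveq : v = -s/u := by
    rw [hv, hw, hs, hu]
    field_simp
    try ring
  -- argument identities
  have hkey : (τ/s) * v = -1/2 := by
    rw [hveq, hu]
    field_simp
    try ring
  have harg1 : (τ/s)/2 = (-1/4 : ℂ)/v := by
    rw [div_eq_div_iff (two_ne_zero) hv0, hkey]
    norm_num
  have harg2 : 2*(τ/s) = -1/v := by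
    rw [eq_div_iff hv0, mul_assoc, hkey]
    norm_num
  have harg3 : (τ/2)/u = (1/4 : ℂ) := by
    rw [div_eq_div_iff hu0 (show (4:ℂ) ≠ 0 from by norm_num), hu]
    ring
  -- nonvanishing of the cpow factors
  have hcv0 : (-I*v) ^ ((1:ℂ)/2) ≠ 0 := by
    rw [Ne, Complex.cpow_eq_zero_iff, not_and_or]
    exact Or.inl (mul_ne_zero (neg_ne_zero.2 I_ne_zero) hv0)
  have hcu0 : (-I*u) ^ ((1:ℂ)/2) ≠ 0 := by
    rw [Ne, Complex.cpow_eq_zero_iff, not_and_or]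
    exact Or.inl (mul_ne_zero (neg_ne_zero.2 I_ne_zero) hu0)
  -- FE1 solved for θ₂(σ/2, 2σ)
  have he1 : cexp (↑π*I*(1/16)/v) * cexp (-↑π*I*(-1/4 : ℂ)^2/v) = 1 := by
    rw [← Complex.exp_add, ← add_div,
      show (↑π*I*(1/16) + -↑π*I*(-1/4 : ℂ)^2 : ℂ) = 0 from by ring, zero_div]
    exact Complex.exp_zero
  have E1 : jacobiTheta₂ ((-1/4 : ℂ)/v) (-1/v)
      = (-I*v) ^ ((1:ℂ)/2) * cexp (↑π*I*(1/16)/v) * jacobiTheta₂ (-1/4 : ℂ) v :=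
    solveFE hcv0 he1 (jacobiTheta₂_functional_equation (-1/4) v)
  -- FE2 solved for θ₂(1/4, w)
  have he2 : cexp (↑π*I*τ/8) * cexp (-↑π*I*(τ/2 : ℂ)^2/u) = 1 := by
    have h8 : -↑π*I*(τ/2 : ℂ)^2/u = -(↑π*I*τ/8) := by
      rw [div_eq_iff hu0, hu]; ring
    rw [h8, ← Complex.exp_add,
      show ↑π*I*τ/8 + -(↑π*I*τ/8) = 0 from by ring]
    exact Complex.exp_zero
  have E2 : jacobiTheta₂ ((τ/2)/u) (-1/u)
      = (-I*u) ^ ((1:ℂ)/2) * cexp (↑π*I*τ/8) * jacobiTheta₂ (τ/2) u :=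
    solveFE hcu0 he2 (jacobiTheta₂_functional_equation (τ/2) u)
  rw [harg3, ← hw] at E2
  -- the shift: θ₂(-1/4, v) = θ₂(1/4, w)
  have SH : jacobiTheta₂ (-1/4 : ℂ) v = jacobiTheta₂ (1/4 : ℂ) w := by
    have h1 := theta_shift (-3/4 : ℂ) v
    rw [show (v : ℂ) + 1 = w from by rw [hv]; ring,
      show (-3/4 : ℂ) + 1/2 = -1/4 from by norm_num] at h1
    have h2 := jacobiTheta₂_add_left (-3/4 : ℂ) w
    rw [show (-3/4 : ℂ) + 1 = 1/4 from by norm_num] at h2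
    rw [← h1, ← h2]
  -- the square root factor
  have hre_v : 0 < (-I*v).re := by
    have e : (-I*v).re = v.im := by simp [Complex.mul_re]
    rw [e]; exact hv_im
  have hre_u : 0 < (-I*u).re := by
    have e : (-I*u).re = u.im := by simp [Complex.mul_re]
    rw [e]; exact hu_im
  have hvu : v * u = -s := by
    rw [hveq]
    field_simp
  have hprod : (-I*v) * (-I*u) = s := by
    have e : (-I*v) * (-I*u) = (I*I) * (v*u) := by ring
    rw [e, Complex.I_mul_I, hvu]
    ring
  have hslit : (-I*v) * (-I*u) ∈ Complex.slitPlane := by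
    rw [hprod]
    exact Complex.mem_slitPlane_iff.2 (Or.inr (ne_of_gt hs_im))
  have hcvu : s ^ ((1:ℂ)/2) = (-I*v)^((1:ℂ)/2) * (-I*u)^((1:ℂ)/2) := by
    rw [← hprod]
    exact cpow_half_mul hre_v hre_u hslit
  -- exponential cancellation
  have hexp : cexp (↑π*I*(τ/s)/8) * cexp (↑π*I*(1/16)/v) = 1 := by
    have h1v : (1:ℂ)/v = -(u/s) := by rw [hveq, one_div_div, div_neg]
    rw [← Complex.exp_add, div_eq_mul_one_div (↑π*I*(1/16)) v, h1v, hu,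
      show ↑π*I*(τ/s)/8 + ↑π*I*(1/16)*(-(2*τ/s)) = 0 from by ring]
    exact Complex.exp_zero
  -- assemble
  calc cexp (↑π*I*(τ/s)/8) * jacobiTheta₂ ((τ/s)/2) (2*(τ/s))
      = cexp (↑π*I*(τ/s)/8) * jacobiTheta₂ ((-1/4 : ℂ)/v) (-1/v) := by rw [harg1, harg2]
    _ = cexp (↑π*I*(τ/s)/8) * ((-I*v)^((1:ℂ)/2) * cexp (↑π*I*(1/16)/v)
        * jacobiTheta₂ (-1/4 : ℂ) v) := by rw [E1]
    _ = (-I*v)^((1:ℂ)/2) * ((cexp (↑π*I*(τ/s)/8) * cexp (↑π*I*(1/16)/v))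
        * jacobiTheta₂ (-1/4 : ℂ) v) := by ring
    _ = (-I*v)^((1:ℂ)/2) * jacobiTheta₂ (-1/4 : ℂ) v := by rw [hexp, one_mul]
    _ = (-I*v)^((1:ℂ)/2) * jacobiTheta₂ (1/4 : ℂ) w := by rw [SH]
    _ = (-I*v)^((1:ℂ)/2) * ((-I*u)^((1:ℂ)/2) * cexp (↑π*I*τ/8)
        * jacobiTheta₂ (τ/2) u) := by rw [E2]
    _ = ((-I*v)^((1:ℂ)/2) * (-I*u)^((1:ℂ)/2)) * (cexp (↑π*I*τ/8)
        * jacobiTheta₂ (τ/2) u) := by ring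
    _ = s ^ ((1:ℂ)/2) * (cexp (↑π*I*τ/8) * jacobiTheta₂ (τ/2) u) := by rw [hcvu]

end Stage13

/-- `θ_Δ(τ/(2τ+1)) = (2τ+1)^{1/2} θ_Δ(τ)` with the principal branch of the square root. -/
theorem thetaTriangle_modular (τ : ℂ) (hτ : 0 < τ.im) :
    thetaTriangle (τ / (2 * τ + 1)) = (2 * τ + 1) ^ ((1 : ℂ) / 2) * thetaTriangle τ := by
  have hτ0 : τ ≠ 0 := fun h => by rw [h] at hτ; simp at hτ
  have hs0 : (2*τ+1 : ℂ) ≠ 0 := fun h => by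
    have : (2*τ+1 : ℂ).im = 0 := by rw [h]; simp
    simp [Complex.add_im, Complex.mul_im] at this
    · linarith
  have hσ : 0 < (τ / (2*τ+1)).im := by
    have hu_im : 0 < (2*τ : ℂ).im := by simp [Complex.mul_im]; exact hτ
    have hu0 : (2*τ : ℂ) ≠ 0 := fun h => by rw [h] at hu_im; simp at hu_im
    have hw_im : 0 < (-1/(2*τ) : ℂ).im := by
      rw [neg_div, neg_im, one_div, Complex.inv_im, neg_div, neg_neg]
      exact div_pos hu_im (Complex.normSq_pos.2 hu0)
    have hv_im : 0 < (-1/(2*τ) - 1 : ℂ).im := by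
      rw [Complex.sub_im, Complex.one_im, sub_zero]; exact hw_im
    have hv0 : (-1/(2*τ) - 1 : ℂ) ≠ 0 := fun h => by rw [h] at hv_im; simp at hv_im
    have h2 : 0 < (2*(τ/(2*τ+1))).im := by
      rw [show (2:ℂ)*(τ/(2*τ+1)) = -1/(-1/(2*τ) - 1) from by
        rw [eq_div_iff hv0]
        field_simp
        try ring]
      rw [neg_div, neg_im, one_div, Complex.inv_im, neg_div, neg_neg]
      exact div_pos hv_im (Complex.normSq_pos.2 hv0)
    have : (2*(τ/(2*τ+1))).im = 2 * (τ/(2*τ+1)).im := by simp [Complex.mul_im]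
    rw [this] at h2
    linarith
  rw [ThetaAux.Stage11.thetaTriangle_eq_theta2 hσ, ThetaAux.Stage11.thetaTriangle_eq_theta2 hτ]
  exact Stage13.partB hτ
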